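/- A retract of an ω-well-filtered T0 space is ω-well-filtered. -/

import Mathlib

/-- The specialization order: `x ≤ y` iff `x ∈ cl {y}`. -/
def specLE {X : Type*} [TopologicalSpace X] (x y : X) : Prop := x ∈ closure ({y} : Set X)

/-- A set is saturated iff it is an upper set in the specialization order. -/
def IsSaturatedSet {X : Type*} [TopologicalSpace X] (K : Set X) : Prop :=
  ∀ x y, x ∈ K → specLE x y → y ∈ K

/-- `X` is well-filtered: for every filtered family `𝒦` of nonempty compact saturated sets
and every open `U`, `⋂𝒦 ⊆ U` implies `K ⊆ U` for some `K ∈ 𝒦`. -/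
def WellFiltered (X : Type*) [TopologicalSpace X] : Prop :=
  ∀ 𝒦 : Set (Set X), 𝒦.Nonempty →
    (∀ K ∈ 𝒦, K.Nonempty ∧ IsCompact K ∧ IsSaturatedSet K) →
    (∀ K₁ ∈ 𝒦, ∀ K₂ ∈ 𝒦, ∃ K₃ ∈ 𝒦, K₃ ⊆ K₁ ∩ K₂) →
    ∀ U : Set X, IsOpen U → ⋂₀ 𝒦 ⊆ U → ∃ K ∈ 𝒦, K ⊆ U

/-- `X` is ω-well-filtered: the countable case of well-filteredness. -/
def OmegaWellFiltered (X : Type*) [TopologicalSpace X] : Prop :=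
  ∀ K : ℕ → Set X, (∀ n, (K n).Nonempty ∧ IsCompact (K n) ∧ IsSaturatedSet (K n)) →
    (∀ m n, ∃ k, K k ⊆ K m ∩ K n) →
    ∀ U : Set X, IsOpen U → (⋂ n, K n) ⊆ U → ∃ n, K n ⊆ U

/-- `X` is a d-space: the closure of every directed subset (in the specialization order)
has a generic point. -/
def DSpace (X : Type*) [TopologicalSpace X] : Prop :=
  ∀ D : Set X, D.Nonempty → DirectedOn specLE D → ∃ x, closure D = closure ({x} : Set X)

section Aux
variable {X : Type*} [TopologicalSpace X]

/-- Upper closure in the specialization order. -/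
def specUp (S : Set X) : Set X := {x | ∃ s ∈ S, specLE s x}

lemma specLE_refl (x : X) : specLE x x := subset_closure rfl

lemma specLE_trans {x y z : X} (h1 : specLE x y) (h2 : specLE y z) : specLE x z := by
  have : closure ({y} : Set X) ⊆ closure ({z} : Set X) := by
    apply closure_minimal _ isClosed_closure
    simpa [specLE] using h2
  exact this h1

lemma isOpen_upper {U : Set X} (hU : IsOpen U) {x y : X} (hx : x ∈ U) (h : specLE x y) :
    y ∈ U := by
  have : ({y} : Set X) ∩ U ≠ ∅ := by
    intro hemp
    have : x ∈ closure ({y} : Set X) := h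
    rw [mem_closure_iff] at this
    exact (this U hU hx).ne_empty (by rwa [Set.inter_comm] at hemp)
  rcases Set.nonempty_iff_ne_empty.2 this with ⟨z, hz1, hz2⟩
  rcases hz1 with rfl
  exact hz2

lemma subset_specUp (S : Set X) : S ⊆ specUp S := fun x hx => ⟨x, hx, specLE_refl x⟩

lemma specUp_subset_open {S U : Set X} (hU : IsOpen U) (h : S ⊆ U) : specUp S ⊆ U := by
  rintro x ⟨s, hs, hle⟩
  exact isOpen_upper hU (h hs) hle

lemma isCompact_specUp {S : Set X} (hS : IsCompact S) : IsCompact (specUp S) := by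
  rw [isCompact_iff_finite_subcover] at *
  intro ι U hU hcov
  rcases hS U hU ((subset_specUp S).trans hcov) with ⟨t, ht⟩
  exact ⟨t, specUp_subset_open (isOpen_biUnion fun i _ => hU i) ht⟩

lemma isSaturated_specUp (S : Set X) : IsSaturatedSet (specUp S) := by
  rintro x y ⟨s, hs, hle⟩ hxy
  exact ⟨s, hs, specLE_trans hle hxy⟩

lemma specLE_map {Y : Type*} [TopologicalSpace Y] {f : X → Y} (hf : Continuous f)
    {x y : X} (h : specLE x y) : specLE (f x) (f y) := by
  have := image_closure_subset_closure_image (s := ({y} : Set X)) hf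
  have hx : f x ∈ f '' closure ({y} : Set X) := ⟨x, h, rfl⟩
  have := this hx
  simpa [specLE] using this

end Aux

/-- A retract of an ω-well-filtered T0 space is ω-well-filtered. -/
theorem omegaWellFiltered_of_retract {X Y : Type*} [TopologicalSpace X] [TopologicalSpace Y]
    [T0Space X] [T0Space Y] (hX : OmegaWellFiltered X)
    (f : X → Y) (g : Y → X) (hf : Continuous f) (hg : Continuous g)
    (hfg : f ∘ g = id) :
    OmegaWellFiltered Y := by
  intro K hK hdir U hU hsub
  set K' : ℕ → Set X := fun n => specUp (g '' K n) with hK'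
  have hprop : ∀ n, (K' n).Nonempty ∧ IsCompact (K' n) ∧ IsSaturatedSet (K' n) := by
    intro n
    obtain ⟨hne, hcomp, hsat⟩ := hK n
    exact ⟨(hne.image g).mono (subset_specUp _), isCompact_specUp (hcomp.image hg),
      isSaturated_specUp _⟩
  have hdir' : ∀ m n, ∃ k, K' k ⊆ K' m ∩ K' n := by
    intro m n
    obtain ⟨k, hk⟩ := hdir m n
    refine ⟨k, ?_⟩
    rintro x ⟨s, ⟨y, hy, rfl⟩, hle⟩
    exact ⟨⟨g y, ⟨y, (hk hy).1, rfl⟩, hle⟩, ⟨g y, ⟨y, (hk hy).2, rfl⟩, hle⟩⟩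
  have hVsub : (⋂ n, K' n) ⊆ f ⁻¹' U := by
    intro x hx
    apply hsub
    rw [Set.mem_iInter] at hx ⊢
    intro n
    obtain ⟨s, ⟨y, hy, rfl⟩, hle⟩ := hx n
    have : specLE y (f x) := by
      have := specLE_map hf hle
      rwa [show f (g y) = y from congrFun hfg y] at this
    exact (hK n).2.2 y (f x) hy this
  obtain ⟨n, hn⟩ := hX K' hprop hdir' (f ⁻¹' U) (hU.preimage hf) hVsub
  refine ⟨n, fun y hy => ?_⟩
  have : g y ∈ K' n := subset_specUp _ ⟨y, hy, rfl⟩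
  have := hn this
  rw [Set.mem_preimage, show f (g y) = y from congrFun hfg y] at this
  exact this
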